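/- Let f ∈ L log L(B_r(x₀)) with r ∈ (0, 1/2] and B_r(x₀) ⊂ ℝ⁴, and define f̂(x) := r⁴ f(x₀ + rx) on B₁. Then there exists a universal constant C > 0 such that ‖f̂‖*_{L log L(B₁)} ≤ C ‖f‖*_{L log L(B_r(x₀))}. -/

import Mathlib

open MeasureTheory Metric Real Filter

open scoped ENNReal NNReal

noncomputable section

abbrev E4 := EuclideanSpace ℝ (Fin 4)

/-- Non-increasing rearrangement of `|f|` on `[0, ∞)`. -/
def rearr (f : E4 → ℝ) (t : ℝ) : ℝ :=
  sInf {s : ℝ | 0 ≤ s ∧ (volume {x : E4 | s < |f x|}).toReal ≤ t}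

/-- The `L log L` seminorm of `f` on `Ω`:  `∫₀^{|Ω|} f*(t) log(2 + 1/t) dt`. -/
def LlogL (f : E4 → ℝ) (Ω : Set E4) : ℝ :=
  ∫ t in Set.Ioo 0 (volume Ω).toReal, rearr (Ω.indicator f) t * Real.log (2 + 1 / t)

/-- `f ∈ L log L(Ω)`. -/
def MemLlogL (f : E4 → ℝ) (Ω : Set E4) : Prop :=
  IntegrableOn (fun x => |f x| * Real.log (2 + |f x|)) Ω

/-- The set whose infimum defines `rearr`. -/
def Sset (f : E4 → ℝ) (t : ℝ) : Set ℝ :=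
  {s : ℝ | 0 ≤ s ∧ (volume {x : E4 | s < |f x|}).toReal ≤ t}

lemma rearr_eq_sInf (f : E4 → ℝ) (t : ℝ) : rearr f t = sInf (Sset f t) := rfl

lemma Sset_bddBelow (f : E4 → ℝ) (t : ℝ) : BddBelow (Sset f t) :=
  ⟨0, fun _ hx => hx.1⟩

lemma rearr_nonneg (f : E4 → ℝ) (t : ℝ) : 0 ≤ rearr f t :=
  Real.sInf_nonneg fun _ hx => hx.1

/-- Lemma: for `f ∈ L log L(B_r(x₀))`, `r ∈ (0,1/2]`, the rescaled function
`f̂(x) := r⁴ f(x₀ + rx)` satisfies `‖f̂‖*_{L log L(B₁)} ≤ C ‖f‖*_{L log L(B_r(x₀))}`. -/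
theorem LlogL_scaling :
    ∃ C : ℝ, 0 < C ∧ ∀ (f : E4 → ℝ) (x₀ : E4) (r : ℝ),
      0 < r → r ≤ 1 / 2 → Measurable f → MemLlogL f (ball x₀ r) →
      LlogL (fun x => r ^ 4 * f (x₀ + r • x)) (ball 0 1) ≤ C * LlogL f (ball x₀ r) := by
  refine ⟨1, one_pos, fun f x₀ r hr hr2 hf hmem => ?_⟩
  rw [one_mul]
  set g : E4 → ℝ := (ball x₀ r).indicator f with hgdef
  set gg : E4 → ℝ := (ball (0:E4) 1).indicator (fun x => r ^ 4 * f (x₀ + r • x)) with hggdef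
  have hr4 : (0:ℝ) < r ^ 4 := by positivity
  have hr4le : r ^ 4 ≤ 1 := pow_le_one₀ hr.le (by linarith)
  -- pointwise identity
  have hpt : ∀ x : E4, gg x = r ^ 4 * g (x₀ + r • x) := by
    intro x
    have hball : x ∈ ball (0:E4) 1 ↔ x₀ + r • x ∈ ball x₀ r := by
      simp only [mem_ball, dist_eq_norm, sub_zero, add_sub_cancel_left, norm_smul,
        Real.norm_eq_abs, abs_of_pos hr]
      rw [mul_lt_iff_lt_one_right hr]
    by_cases hx : x ∈ ball (0:E4) 1
    · rw [hggdef, hgdef, Set.indicator_of_mem hx, Set.indicator_of_mem (hball.1 hx)]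
    · rw [hggdef, hgdef, Set.indicator_of_notMem hx,
        Set.indicator_of_notMem (fun h => hx (hball.2 h)), mul_zero]
  -- volume scaling for preimages
  have hvol : ∀ A : Set E4,
      volume ((fun x => x₀ + r • x) ⁻¹' A) = ENNReal.ofReal ((r ^ 4)⁻¹) * volume A := by
    intro A
    have h1 : (fun x : E4 => x₀ + r • x) ⁻¹' A
        = (fun x : E4 => r • x) ⁻¹' ((fun y => x₀ + y) ⁻¹' A) := rfl
    rw [h1, Measure.addHaar_preimage_smul volume hr.ne', measure_preimage_add]
    congr 2
    rw [finrank_euclideanSpace_fin, abs_of_pos (by positivity)]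
  have hvolR : ∀ a : ℝ, (volume {x : E4 | a < |gg x|}).toReal
      = (r ^ 4)⁻¹ * (volume {y : E4 | a / r ^ 4 < |g y|}).toReal := by
    intro a
    have hset : {x : E4 | a < |gg x|}
        = (fun x => x₀ + r • x) ⁻¹' {y : E4 | a / r ^ 4 < |g y|} := by
      ext x
      simp only [Set.mem_setOf_eq, Set.mem_preimage, hpt x, abs_mul, abs_of_pos hr4]
      rw [div_lt_iff₀' hr4]
    rw [hset, hvol, ENNReal.toReal_mul, ENNReal.toReal_ofReal (by positivity)]
  -- mapping between the defining sets
  have hmap₁ : ∀ {t s : ℝ}, s ∈ Sset g (r ^ 4 * t) → r ^ 4 * s ∈ Sset gg t := by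
    intro t s hs
    refine ⟨mul_nonneg hr4.le hs.1, ?_⟩
    have hds : r ^ 4 * s / r ^ 4 = s := by field_simp
    rw [hvolR, hds]
    calc (r ^ 4)⁻¹ * (volume {y : E4 | s < |g y|}).toReal
        ≤ (r ^ 4)⁻¹ * (r ^ 4 * t) := by
          exact mul_le_mul_of_nonneg_left hs.2 (inv_nonneg.2 hr4.le)
      _ = t := by field_simp
  have hmap₂ : ∀ {t s : ℝ}, s ∈ Sset gg t → s / r ^ 4 ∈ Sset g (r ^ 4 * t) := by
    intro t s hs
    refine ⟨div_nonneg hs.1 hr4.le, ?_⟩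
    have h2 : (volume {y : E4 | s / r ^ 4 < |g y|}).toReal
        = r ^ 4 * (volume {x : E4 | s < |gg x|}).toReal := by
      rw [hvolR s]; field_simp
    rw [h2]
    exact mul_le_mul_of_nonneg_left hs.2 hr4.le
  -- integrability of f on the ball, hence of g
  have hlog2 : (0:ℝ) < Real.log 2 := Real.log_pos one_lt_two
  have hf_int : IntegrableOn f (ball x₀ r) := by
    refine Integrable.mono' (hmem.const_mul (Real.log 2)⁻¹)
      (hf.aestronglyMeasurable.restrict) ?_
    refine Filter.Eventually.of_forall fun x => ?_
    have hl : Real.log 2 ≤ Real.log (2 + |f x|) :=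
      Real.log_le_log two_pos (by linarith [abs_nonneg (f x)])
    have h0 : (0:ℝ) ≤ |f x| := abs_nonneg _
    rw [Real.norm_eq_abs]
    rw [← mul_le_mul_iff_right₀ hlog2]
    calc Real.log 2 * |f x| ≤ |f x| * Real.log (2 + |f x|) := by nlinarith
      _ = Real.log 2 * ((Real.log 2)⁻¹ * (|f x| * Real.log (2 + |f x|))) := by
          field_simp
  have hg_int : Integrable g := (integrable_indicator_iff measurableSet_ball).2 hf_int
  have hg_meas : Measurable g := hf.indicator measurableSet_ball
  -- nonemptiness of Sset g τ for τ > 0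
  have hSne : ∀ τ : ℝ, 0 < τ → (Sset g τ).Nonempty := by
    intro τ hτ
    set L : ℝ≥0∞ := ∫⁻ x, (‖g x‖₊ : ℝ≥0∞) with hLdef
    have hLt : L ≠ ⊤ := hg_int.2.ne
    set s : ℝ := max 1 (L.toReal / τ) with hsdef
    have hs1 : (1:ℝ) ≤ s := le_max_left _ _
    have hs0 : (0:ℝ) < s := lt_of_lt_of_le one_pos hs1
    refine ⟨s, by linarith, ?_⟩
    have hmk : volume {x : E4 | s < |g x|} ≤ L / ENNReal.ofReal s := by
      refine (measure_mono ?_).trans (meas_ge_le_lintegral_div hg_meas.nnnorm.coe_nnreal_ennreal.aemeasurable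
        (by simp [hs0]) ENNReal.ofReal_ne_top)
      intro x hx
      simp only [Set.mem_setOf_eq] at hx ⊢
      rw [← enorm_eq_nnnorm, ← ofReal_norm]
      exact ENNReal.ofReal_le_ofReal (le_of_lt (by simpa using hx))
    have hne : L / ENNReal.ofReal s ≠ ⊤ := by
      simp [ENNReal.div_eq_top, hLt, ENNReal.ofReal_eq_zero, not_le, hs0]
    calc (volume {x : E4 | s < |g x|}).toReal
        ≤ (L / ENNReal.ofReal s).toReal := ENNReal.toReal_mono hne hmk
      _ = L.toReal / s := by rw [ENNReal.toReal_div, ENNReal.toReal_ofReal hs0.le]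
      _ ≤ τ := by
          rw [div_le_iff₀ hs0]
          calc L.toReal = τ * (L.toReal / τ) := by field_simp
            _ ≤ τ * s := mul_le_mul_of_nonneg_left (le_max_right _ _) hτ.le
  -- the rearrangement scaling identity
  have hrearr : ∀ t : ℝ, 0 < t → rearr gg t = r ^ 4 * rearr g (r ^ 4 * t) := by
    intro t ht
    have ht' : 0 < r ^ 4 * t := by positivity
    obtain ⟨s₀, hs₀⟩ := hSne (r ^ 4 * t) ht'
    have hne₁ : (Sset gg t).Nonempty := ⟨r ^ 4 * s₀, hmap₁ hs₀⟩
    rw [rearr_eq_sInf, rearr_eq_sInf]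
    apply le_antisymm
    · have h1 : sInf (Sset gg t) / r ^ 4 ≤ sInf (Sset g (r ^ 4 * t)) := by
        refine le_csInf ⟨s₀, hs₀⟩ fun s hs => ?_
        rw [div_le_iff₀ hr4]
        have := csInf_le (Sset_bddBelow gg t) (hmap₁ hs)
        linarith
      calc sInf (Sset gg t) = r ^ 4 * (sInf (Sset gg t) / r ^ 4) := by field_simp
        _ ≤ r ^ 4 * sInf (Sset g (r ^ 4 * t)) :=
            mul_le_mul_of_nonneg_left h1 hr4.le
    · refine le_csInf hne₁ fun s hs => ?_
      have h2 := csInf_le (Sset_bddBelow g (r ^ 4 * t)) (hmap₂ hs)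
      rw [le_div_iff₀ hr4] at h2
      linarith
  -- antitonicity of rearr g on (0, ∞)
  have hanti : AntitoneOn (rearr g) (Set.Ioi (0:ℝ)) := by
    intro a ha b _ hab
    exact csInf_le_csInf (Sset_bddBelow g b) (hSne a ha)
      (fun s hs => ⟨hs.1, hs.2.trans hab⟩)
  -- abbreviations
  set V1 : ℝ := (volume (ball (0:E4) 1)).toReal with hV1def
  have hV1 : 0 ≤ V1 := ENNReal.toReal_nonneg
  set F : ℝ → ℝ := fun u => rearr g u * Real.log (2 + 1 / u) with hFdef
  have hLlogLr : LlogL f (ball x₀ r) = ∫ u in Set.Ioo 0 (volume (ball x₀ r)).toReal, F u := rfl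
  have hLlogL1 : LlogL (fun x => r ^ 4 * f (x₀ + r • x)) (ball 0 1)
      = ∫ t in Set.Ioo 0 V1, rearr gg t * Real.log (2 + 1 / t) := rfl
  have hFnonneg : ∀ u : ℝ, 0 < u → 0 ≤ F u := by
    intro u hu
    apply mul_nonneg (rearr_nonneg _ _)
    apply Real.log_nonneg
    have : 0 < 1 / u := by positivity
    linarith
  -- RHS is nonnegative
  have hRHS : 0 ≤ LlogL f (ball x₀ r) := by
    rw [hLlogLr]
    exact setIntegral_nonneg measurableSet_Ioo fun u hu => hFnonneg u hu.1
  by_cases hint : IntegrableOn (fun t => rearr gg t * Real.log (2 + 1 / t))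
      (Set.Ioo 0 V1) volume
  swap
  · rw [hLlogL1, integral_undef hint]; exact hRHS
  -- measurability of t ↦ rearr g (r⁴ t) on (0, V1)
  have hφanti : AntitoneOn (fun t => rearr g (r ^ 4 * t)) (Set.Ioo 0 V1) := by
    intro a ha b hb hab
    exact hanti (by simpa using mul_pos hr4 ha.1) (by simpa using mul_pos hr4 hb.1)
      (mul_le_mul_of_nonneg_left hab hr4.le)
  have hφmeas : AEMeasurable (fun t => rearr g (r ^ 4 * t))
      (volume.restrict (Set.Ioo 0 V1)) :=
    aemeasurable_restrict_of_antitoneOn measurableSet_Ioo hφanti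
  have hψmeas : AEStronglyMeasurable (fun t => F (r ^ 4 * t))
      (volume.restrict (Set.Ioo 0 V1)) := by
    have hlogmeas : Measurable fun t : ℝ => Real.log (2 + 1 / (r ^ 4 * t)) := by
      apply Real.measurable_log.comp
      exact (measurable_const.add ((measurable_const.mul measurable_id).const_div 1))
    exact (hφmeas.mul hlogmeas.aemeasurable).aestronglyMeasurable
  -- integrability of φ
  have hφint : IntegrableOn (fun t => rearr g (r ^ 4 * t)) (Set.Ioo 0 V1) := by
    refine Integrable.mono' (hint.const_mul ((r ^ 4 * Real.log 2)⁻¹))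
      hφmeas.aestronglyMeasurable ?_
    filter_upwards [self_mem_ae_restrict measurableSet_Ioo] with t ht
    have ht0 : 0 < t := ht.1
    have hG : 0 ≤ rearr g (r ^ 4 * t) := rearr_nonneg _ _
    have hl : Real.log 2 ≤ Real.log (2 + 1 / t) :=
      Real.log_le_log two_pos (by have h1t : 0 < 1 / t := (by positivity); linarith)
    rw [Real.norm_eq_abs, abs_of_nonneg hG, hrearr t ht0]
    have key : (r ^ 4 * Real.log 2)⁻¹ * (r ^ 4 * rearr g (r ^ 4 * t) * Real.log (2 + 1 / t))
        = rearr g (r ^ 4 * t) * (Real.log (2 + 1 / t) / Real.log 2) := by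
      field_simp
    rw [key]
    calc rearr g (r ^ 4 * t) = rearr g (r ^ 4 * t) * 1 := (mul_one _).symm
      _ ≤ rearr g (r ^ 4 * t) * (Real.log (2 + 1 / t) / Real.log 2) := by
          apply mul_le_mul_of_nonneg_left _ hG
          rw [le_div_iff₀ hlog2, one_mul]
          exact hl
  -- integrability of ψ = F ∘ (r⁴ ·)
  have hψint : IntegrableOn (fun t => F (r ^ 4 * t)) (Set.Ioo 0 V1) := by
    refine Integrable.mono'
      ((hint.const_mul ((r ^ 4)⁻¹)).add (hφint.const_mul (-(4 * Real.log r))))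
      hψmeas ?_
    filter_upwards [self_mem_ae_restrict measurableSet_Ioo] with t ht
    have ht0 : 0 < t := ht.1
    have hG : 0 ≤ rearr g (r ^ 4 * t) := rearr_nonneg _ _
    have h1t : 0 < 1 / t := by positivity
    have h1rt : 0 < 1 / (r ^ 4 * t) := by positivity
    have hFt : 0 ≤ F (r ^ 4 * t) := hFnonneg _ (by positivity)
    rw [Real.norm_eq_abs, abs_of_nonneg hFt]
    have hlogle : Real.log (2 + 1 / (r ^ 4 * t))
        ≤ Real.log (2 + 1 / t) + (-(4 * Real.log r)) := by
      have hstep : 2 + 1 / (r ^ 4 * t) ≤ (r ^ 4)⁻¹ * (2 + 1 / t) := by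
        have hinv1 : (1:ℝ) ≤ (r ^ 4)⁻¹ := (one_le_inv_iff₀).2 ⟨hr4, hr4le⟩
        have : (r ^ 4)⁻¹ * (2 + 1 / t) = 2 * (r ^ 4)⁻¹ + 1 / (r ^ 4 * t) := by
          field_simp
        rw [this]
        nlinarith
      calc Real.log (2 + 1 / (r ^ 4 * t)) ≤ Real.log ((r ^ 4)⁻¹ * (2 + 1 / t)) :=
            Real.log_le_log (by linarith) hstep
        _ = Real.log (r ^ 4)⁻¹ + Real.log (2 + 1 / t) := by
            rw [Real.log_mul (by positivity) (by positivity)]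
        _ = Real.log (2 + 1 / t) + (-(4 * Real.log r)) := by
            rw [Real.log_inv, Real.log_pow]
            push_cast
            ring
    calc F (r ^ 4 * t) = rearr g (r ^ 4 * t) * Real.log (2 + 1 / (r ^ 4 * t)) := rfl
      _ ≤ rearr g (r ^ 4 * t) * (Real.log (2 + 1 / t) + (-(4 * Real.log r))) :=
          mul_le_mul_of_nonneg_left hlogle hG
      _ = (r ^ 4)⁻¹ * (r ^ 4 * rearr g (r ^ 4 * t) * Real.log (2 + 1 / t))
          + (-(4 * Real.log r)) * rearr g (r ^ 4 * t) := by field_simp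
      _ = (r ^ 4)⁻¹ * (rearr gg t * Real.log (2 + 1 / t))
          + (-(4 * Real.log r)) * rearr g (r ^ 4 * t) := by rw [hrearr t ht0]
  -- pointwise comparison on (0, V1)
  have hcomp : ∀ t ∈ Set.Ioo (0:ℝ) V1,
      rearr gg t * Real.log (2 + 1 / t) ≤ r ^ 4 * F (r ^ 4 * t) := by
    intro t ht
    have ht0 : 0 < t := ht.1
    have hG : 0 ≤ rearr g (r ^ 4 * t) := rearr_nonneg _ _
    have hlogle : Real.log (2 + 1 / t) ≤ Real.log (2 + 1 / (r ^ 4 * t)) := by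
      apply Real.log_le_log (by have h1t : 0 < 1 / t := (by positivity); linarith)
      have h1 : 1 / t ≤ 1 / (r ^ 4 * t) := by
        apply one_div_le_one_div_of_le (by positivity)
        nlinarith
      linarith
    rw [hrearr t ht0]
    calc r ^ 4 * rearr g (r ^ 4 * t) * Real.log (2 + 1 / t)
        ≤ r ^ 4 * rearr g (r ^ 4 * t) * Real.log (2 + 1 / (r ^ 4 * t)) := by
          apply mul_le_mul_of_nonneg_left hlogle (by positivity)
      _ = r ^ 4 * F (r ^ 4 * t) := by simp only [hFdef]; ring
  -- change of variables
  have hVr : (volume (ball x₀ r)).toReal = r ^ 4 * V1 := by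
    rw [Measure.addHaar_ball volume x₀ hr.le, finrank_euclideanSpace_fin,
      ENNReal.toReal_mul, ENNReal.toReal_ofReal (by positivity), hV1def]
  have hcov : ∫ t in Set.Ioo 0 V1, F (r ^ 4 * t)
      = (r ^ 4)⁻¹ * ∫ u in Set.Ioo 0 (r ^ 4 * V1), F u := by
    rw [← integral_Ioc_eq_integral_Ioo, ← intervalIntegral.integral_of_le hV1,
      intervalIntegral.integral_comp_mul_left F hr4.ne', mul_zero, smul_eq_mul,
      intervalIntegral.integral_of_le (by positivity), integral_Ioc_eq_integral_Ioo]
  -- conclusion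
  rw [hLlogL1, hLlogLr, hVr]
  calc ∫ t in Set.Ioo 0 V1, rearr gg t * Real.log (2 + 1 / t)
      ≤ ∫ t in Set.Ioo 0 V1, r ^ 4 * F (r ^ 4 * t) :=
        setIntegral_mono_on hint (hψint.const_mul _) measurableSet_Ioo hcomp
    _ = r ^ 4 * ∫ t in Set.Ioo 0 V1, F (r ^ 4 * t) := integral_const_mul _ _
    _ = ∫ u in Set.Ioo 0 (r ^ 4 * V1), F u := by
        rw [hcov, ← mul_assoc, mul_inv_cancel₀ hr4.ne', one_mul]
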